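/- With K the tridiagonal period matrix defined by K_{ii} = p_{i-1} + p_i + 2(λ_i - λ_{i-1}) (p_0 = L), K_{i,i+1} = K_{i+1,i} = -p_i, K_{ij} = 0 otherwise, and the vector g⃗ = (g, g-1, ..., 1), the identity g⃗ K = (g+1)L e_1 holds, where e_1 = (1,0,...,0). -/

import Mathlib

open Finset

/-- The tridiagonal period matrix of the tropical spectral curve, in 0-based
indexing: row `a` corresponds to the 1-based index `a+1`. -/
noncomputable def periodK (g : ℕ) (lam p : ℕ → ℝ) : Matrix (Fin g) (Fin g) ℝ :=
  fun a b =>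
    if a = b then p a.val + p (a.val + 1) + 2 * (lam (a.val + 1) - lam a.val)
    else if a.val + 1 = b.val then -p (a.val + 1)
    else if b.val + 1 = a.val then -p (b.val + 1)
    else 0

lemma lam_mono (g : ℕ) (lam : ℕ → ℝ) (hlam : ∀ i, i < g → lam i < lam (i + 1)) :
    ∀ m n, m ≤ n → n ≤ g → lam m ≤ lam n := by
  intro m n hmn hng
  induction n with
  | zero => interval_cases m; rfl
  | succ k ih =>
    rcases Nat.lt_or_ge m (k + 1) with h | h
    · exact le_trans (ih (by omega) (by omega)) (le_of_lt (hlam k (by omega)))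
    · have : m = k + 1 := by omega
      simp [this, le_refl]

lemma p_one (g : ℕ) (hg : 0 < g) (L : ℝ) (lam p : ℕ → ℝ)
    (hlam : ∀ i, i < g → lam i < lam (i + 1))
    (hp : ∀ i, 1 ≤ i → i ≤ g →
      p i = L - 2 * ∑ j ∈ Finset.Icc 1 g, min (lam i - lam 0) (lam j - lam 0)) :
    p 1 = L - 2 * g * (lam 1 - lam 0) := by
  have hmono := lam_mono g lam hlam
  rw [hp 1 le_rfl hg]
  have hsum : ∑ j ∈ Finset.Icc 1 g, min (lam 1 - lam 0) (lam j - lam 0)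
      = ∑ j ∈ Finset.Icc 1 g, (lam 1 - lam 0) := by
    refine Finset.sum_congr rfl ?_
    intro j hj
    rw [Finset.mem_Icc] at hj
    have : lam 1 ≤ lam j := hmono 1 j hj.1 hj.2
    simp [min_eq_left, this, sub_le_sub_right]
  rw [hsum, Finset.sum_const, Nat.card_Icc]
  push_cast
  ring

lemma p_diff (g : ℕ) (L : ℝ) (lam p : ℕ → ℝ)
    (hlam : ∀ i, i < g → lam i < lam (i + 1))
    (hp : ∀ i, 1 ≤ i → i ≤ g →
      p i = L - 2 * ∑ j ∈ Finset.Icc 1 g, min (lam i - lam 0) (lam j - lam 0)) :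
    ∀ i, 1 ≤ i → i + 1 ≤ g →
      p (i + 1) - p i = -2 * ((g : ℝ) - i) * (lam (i + 1) - lam i) := by
  intro i h1 h2
  have hmono := lam_mono g lam hlam
  rw [hp (i + 1) (by omega) h2, hp i h1 (by omega)]
  have hIcc : (Finset.Icc 1 g : Finset ℕ) = Finset.Ioc 0 g := by
    rw [← Finset.Icc_add_one_left_eq_Ioc]; rfl
  have hIcc1 : (Finset.Icc 1 i : Finset ℕ) = Finset.Ioc 0 i := by
    rw [← Finset.Icc_add_one_left_eq_Ioc]; rfl
  have hsplit : ∀ c : ℕ, c ≤ g →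
      (∑ j ∈ Finset.Ioc 0 g, min (lam c - lam 0) (lam j - lam 0))
      = (∑ j ∈ Finset.Ioc 0 i, min (lam c - lam 0) (lam j - lam 0))
        + ∑ j ∈ Finset.Ioc i g, min (lam c - lam 0) (lam j - lam 0) := by
    intro c _
    rw [Finset.sum_Ioc_consecutive _ (Nat.zero_le i) (by omega)]
  rw [hIcc, hsplit (i+1) h2, hsplit i (by omega)]
  have hA : ∀ c : ℕ, i ≤ c → c ≤ g →
      (∑ j ∈ Finset.Ioc 0 i, min (lam c - lam 0) (lam j - lam 0))
      = ∑ j ∈ Finset.Ioc 0 i, (lam j - lam 0) := by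
    intro c hc hcg
    refine Finset.sum_congr rfl ?_
    intro j hj
    rw [Finset.mem_Ioc] at hj
    have : lam j ≤ lam c := hmono j c (by omega) hcg
    exact min_eq_right (by linarith)
  have hB : ∀ c : ℕ, c ≤ i + 1 → c ≤ g →
      (∑ j ∈ Finset.Ioc i g, min (lam c - lam 0) (lam j - lam 0))
      = ((g : ℝ) - i) * (lam c - lam 0) := by
    intro c hc hcg
    have : ∑ j ∈ Finset.Ioc i g, min (lam c - lam 0) (lam j - lam 0)
        = ∑ j ∈ Finset.Ioc i g, (lam c - lam 0) := by
      refine Finset.sum_congr rfl ?_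
      intro j hj
      rw [Finset.mem_Ioc] at hj
      have : lam c ≤ lam j := hmono c j (by omega) hj.2
      exact min_eq_left (by linarith)
    rw [this, Finset.sum_const, Nat.card_Ioc]
    have hig : i ≤ g := by omega
    rw [nsmul_eq_mul]
    congr 1
    push_cast [hig]
    ring
  rw [hA (i+1) (by omega) h2, hA i le_rfl (by omega),
    hB (i+1) le_rfl h2, hB i (by omega) (by omega)]
  ring

theorem gvec_mul_K (g : ℕ) (hg : 0 < g) (L : ℝ) (lam p : ℕ → ℝ)
    (hlam : ∀ i, i < g → lam i < lam (i + 1))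
    (hL : 2 * ∑ i ∈ Finset.Icc 1 g, (lam i - lam 0) < L)
    (hp0 : p 0 = L)
    (hp : ∀ i, 1 ≤ i → i ≤ g →
      p i = L - 2 * ∑ j ∈ Finset.Icc 1 g, min (lam i - lam 0) (lam j - lam 0)) :
    ∀ b : Fin g, (∑ a : Fin g, ((g : ℝ) - a.val) * periodK g lam p a b) =
      if b.val = 0 then (g + 1) * L else 0 := by
  intro b
  obtain ⟨bv, hb⟩ := b
  have key : ∀ a : Fin g, ((g : ℝ) - a.val) * periodK g lam p a ⟨bv, hb⟩ =
      (if a.val = bv then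
        ((g : ℝ) - a.val) * (p a.val + p (a.val + 1) + 2 * (lam (a.val + 1) - lam a.val)) else 0)
    + (if a.val + 1 = bv then ((g : ℝ) - a.val) * (-p (a.val + 1)) else 0)
    + (if bv + 1 = a.val then ((g : ℝ) - a.val) * (-p (bv + 1)) else 0) := by
    intro a
    simp only [periodK, Fin.ext_iff]
    by_cases h1 : a.val = bv
    · have h2 : ¬ a.val + 1 = bv := by omega
      have h3 : ¬ bv + 1 = a.val := by omega
      simp only [if_pos h1, if_neg h2, if_neg h3]
      ring
    · by_cases h2 : a.val + 1 = bv
      · have h3 : ¬ bv + 1 = a.val := by omega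
        simp only [if_neg h1, if_pos h2, if_neg h3]
        ring
      · by_cases h3 : bv + 1 = a.val
        · simp only [if_neg h1, if_neg h2, if_pos h3]
          ring
        · simp only [if_neg h1, if_neg h2, if_neg h3]
          ring
  rw [Finset.sum_congr rfl (fun a _ => key a)]
  rw [Finset.sum_add_distrib, Finset.sum_add_distrib]
  have S1 : (∑ a : Fin g, if a.val = bv then
      ((g : ℝ) - a.val) * (p a.val + p (a.val + 1) + 2 * (lam (a.val + 1) - lam a.val)) else 0)
      = ((g : ℝ) - bv) * (p bv + p (bv + 1) + 2 * (lam (bv + 1) - lam bv)) := by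
    rw [Finset.sum_eq_single (⟨bv, hb⟩ : Fin g)]
    · simp
    · intro x _ hx
      have : x.val ≠ bv := fun h => hx (Fin.ext h)
      simp [this]
    · simp
  have S2 : (∑ a : Fin g, if a.val + 1 = bv then ((g : ℝ) - a.val) * (-p (a.val + 1)) else 0)
      = if bv = 0 then 0 else ((g : ℝ) - (bv - 1 : ℕ)) * (-p bv) := by
    rcases Nat.eq_zero_or_pos bv with h0 | h0
    · simp [h0]
    · rw [if_neg (by omega)]
      rw [Finset.sum_eq_single (⟨bv - 1, by omega⟩ : Fin g)]
      · simp [Nat.sub_add_cancel h0]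
      · intro x _ hx
        have : x.val + 1 ≠ bv := by
          intro h
          exact hx (Fin.ext (by simp; omega))
        simp [this]
      · simp
  have S3 : (∑ a : Fin g, if bv + 1 = a.val then ((g : ℝ) - a.val) * (-p (bv + 1)) else 0)
      = ((g : ℝ) - (bv + 1 : ℕ)) * (-p (bv + 1)) := by
    rcases Nat.lt_or_ge (bv + 1) g with hlt | hge
    · rw [Finset.sum_eq_single (⟨bv + 1, hlt⟩ : Fin g)]
      · simp
      · intro x _ hx
        have : bv + 1 ≠ x.val := by
          intro h
          exact hx (Fin.ext (by simp; omega))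
        simp [this]
      · simp
    · have hgeq : bv + 1 = g := by omega
      rw [Finset.sum_eq_zero, hgeq]
      · simp
      · intro x _
        have : bv + 1 ≠ x.val := by omega
        simp [this]
  rw [S1, S2, S3]
  rcases Nat.eq_zero_or_pos bv with h0 | h0
  · subst h0
    rw [if_pos rfl, if_pos rfl]
    have hp1 := p_one g hg L lam p hlam hp
    push_cast
    rw [hp0, hp1]
    ring
  · have hne : ¬ (bv = 0) := by omega
    rw [if_neg hne, if_neg hne]
    obtain ⟨k, rfl⟩ : ∃ k, bv = k + 1 := ⟨bv - 1, by omega⟩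
    have hd := p_diff g L lam p hlam hp (k + 1) (by omega) (by omega)
    have hcast : ((k + 1 - 1 : ℕ) : ℝ) = (k : ℝ) := by norm_num
    rw [hcast]
    push_cast at hd ⊢
    linear_combination hd
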